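/- arXiv:2007.09349 — 3 statements merged into one kernel-verified Lean document; each statement's English description precedes it below -/
import Mathlib

section
/- Let g_n be a density generator with cumulative generators Ḡ_n and 𝒢̄_n, and suppose ∫_{ℝⁿ} ‖z‖² Ḡ_n(‖z‖²/2) dz < ∞. Then c_n* ∫_{ℝⁿ} ‖z‖² Ḡ_n(‖z‖²/2) dz = n · (c_n*/c_n**); that is, for Z ~ E_n(0, I_n, Ḡ_n), E[ZᵀZ] = n c_n*/c_n**. -/
open MeasureTheory Real Set
open scoped ENNReal


lemma aux1 (q q' : ℝ) (f F : ℝ → ℝ) (hf0 : ∀ t, 0 ≤ f t) (hfm : Measurable f)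
    (hw : IntegrableOn (fun t : ℝ => t ^ q * f t) (Ioi 0))
    (hF : ∀ u : ℝ, 0 < u → F u = ∫ v in Ioi u, f v)
    (hF_pos : 0 < ∫ t in Ioi (0:ℝ), t ^ q' * F t) :
    ∀ u : ℝ, 0 < u → IntegrableOn f (Ioi u) := by
  by_cases h : ∃ a : ℝ, 0 < a ∧ IntegrableOn f (Ioi a)
  · obtain ⟨a, ha, hint⟩ := h
    intro u hu
    rcases le_or_gt a u with hau | hua
    · exact hint.mono_set (Ioi_subset_Ioi hau)
    · rw [← Ioc_union_Ioi_eq_Ioi hua.le]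
      refine MeasureTheory.IntegrableOn.union ?_ hint
      set m := min (u ^ q) (a ^ q) with hm
      have hm0 : 0 < m := lt_min (Real.rpow_pos_of_pos hu _) (Real.rpow_pos_of_pos (hu.trans hua) _)
      have key : ∀ t ∈ Ioc u a, m ≤ t ^ q := by
        intro t ht
        rcases le_or_gt 0 q with hq | hq
        · exact le_trans (min_le_left _ _) (Real.rpow_le_rpow hu.le ht.1.le hq)
        · exact le_trans (min_le_right _ _) (Real.rpow_le_rpow_of_nonpos (hu.trans ht.1) ht.2 hq.le)
      refine Integrable.mono (((hw.mono_set (fun t ht => lt_trans hu ht.1 : Ioc u a ⊆ Ioi 0)).const_mul m⁻¹)) hfm.aestronglyMeasurable ?_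
      refine (ae_restrict_iff' measurableSet_Ioc).2 (Filter.Eventually.of_forall fun t ht => ?_)
      have h1 : 0 < t := lt_trans hu ht.1
      have h2 : 0 ≤ t ^ q * f t := mul_nonneg (Real.rpow_nonneg h1.le _) (hf0 t)
      rw [Real.norm_eq_abs, Real.norm_eq_abs, abs_of_nonneg (hf0 t), abs_of_nonneg (by positivity : (0:ℝ) ≤ m⁻¹ * (t ^ q * f t))]
      calc f t = m⁻¹ * (m * f t) := by field_simp
        _ ≤ m⁻¹ * (t ^ q * f t) := by
            apply mul_le_mul_of_nonneg_left (mul_le_mul_of_nonneg_right (key t ht) (hf0 t)) (by positivity)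
  · exfalso
    push_neg at h
    have hF0 : EqOn (fun t : ℝ => t ^ q' * F t) (fun _ => (0:ℝ)) (Ioi 0) := by
      intro t ht
      have : ¬ IntegrableOn f (Ioi t) := h t ht
      simp only [hF t ht, integral_undef this, mul_zero]
    rw [setIntegral_congr_fun measurableSet_Ioi hF0, integral_const] at hF_pos
    simp at hF_pos

lemma aux2 (f : ℝ → ℝ) (hf0 : ∀ t, 0 ≤ f t) (hfm : Measurable f)
    (hint : ∀ u : ℝ, 0 < u → IntegrableOn f (Ioi u)) :
    ∃ f₀ : ℝ → ℝ, Measurable f₀ ∧ (∀ t, 0 ≤ f₀ t) ∧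
      (∀ u : ℝ, 0 < u → (∫ v in Ioi u, f v) = f₀ u) ∧
      (∀ u : ℝ, 0 < u → (∫⁻ v in Ioi u, ENNReal.ofReal (f v)) = ENNReal.ofReal (f₀ u)) := by
  set φ : ℝ → ℝ≥0∞ := fun u => ∫⁻ v in Ioi u, ENNReal.ofReal (f v) with hφ
  have hanti : Antitone φ := fun u v huv => lintegral_mono_set (Ioi_subset_Ioi huv)
  refine ⟨fun u => (φ u).toReal, ENNReal.measurable_toReal.comp hanti.measurable,
    fun t => ENNReal.toReal_nonneg, ?_, ?_⟩
  all_goals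
    intro u hu
    have hof : ENNReal.ofReal (∫ v in Ioi u, f v) = φ u :=
      ofReal_integral_eq_lintegral_ofReal (hint u hu)
        (Filter.Eventually.of_forall fun t => hf0 t)
  · show _ = (φ u).toReal
    rw [← hof, ENNReal.toReal_ofReal (setIntegral_nonneg measurableSet_Ioi fun t _ => hf0 t)]
  · show φ u = ENNReal.ofReal (φ u).toReal
    rw [← hof, ENNReal.toReal_ofReal (setIntegral_nonneg measurableSet_Ioi fun t _ => hf0 t)]

lemma aux3 (p : ℝ) (hp : 0 < p) (f₀ F₀ : ℝ → ℝ) (hf₀m : Measurable f₀) (hf₀0 : ∀ t, 0 ≤ f₀ t)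
    (hF₀ : ∀ u : ℝ, 0 < u → (∫⁻ v in Ioi u, ENNReal.ofReal (f₀ v)) = ENNReal.ofReal (F₀ u))
    (hF₀0 : ∀ t, 0 ≤ F₀ t)
    (hF₀int : IntegrableOn (fun t : ℝ => t ^ (p - 1) * F₀ t) (Ioi 0)) :
    IntegrableOn (fun t : ℝ => t ^ p * f₀ t) (Ioi 0) ∧
    (∫ t in Ioi 0, t ^ p * f₀ t) = p * ∫ t in Ioi 0, t ^ (p - 1) * F₀ t := by
  set μ := (volume : Measure ℝ).restrict (Ioi (0:ℝ)) with hμ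
  set K : ℝ → ℝ → ℝ≥0∞ := fun t s => {x : ℝ × ℝ | x.2 < x.1}.indicator
      (fun x => ENNReal.ofReal (p * x.2 ^ (p - 1)) * ENNReal.ofReal (f₀ x.1)) (t, s) with hK
  have hIF : 0 ≤ ∫ t in Ioi (0:ℝ), t ^ (p - 1) * F₀ t :=
    setIntegral_nonneg measurableSet_Ioi fun t ht =>
      mul_nonneg (Real.rpow_nonneg (le_of_lt ht) _) (hF₀0 t)
  have hKm : Measurable (Function.uncurry K) := by
    apply Measurable.indicator
    · exact ((measurable_snd.pow_const _).const_mul p).ennreal_ofReal.mul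
        (hf₀m.comp measurable_fst).ennreal_ofReal
    · exact measurableSet_lt measurable_snd measurable_fst
  have step1 : ∀ t ∈ Ioi (0:ℝ), ENNReal.ofReal (t ^ p * f₀ t) = ∫⁻ s, K t s ∂μ := by
    intro t ht
    have e1 : ∀ s, K t s =
        (Iio t).indicator (fun s => ENNReal.ofReal (p * s ^ (p - 1))) s * ENNReal.ofReal (f₀ t) := by
      intro s; by_cases h : s < t <;> simp [hK, Set.indicator, h]
    simp only [e1]
    rw [lintegral_mul_const' _ _ ENNReal.ofReal_ne_top, lintegral_indicator measurableSet_Iio,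
      hμ, Measure.restrict_restrict measurableSet_Iio, Set.Iio_inter_Ioi]
    have hInt : IntegrableOn (fun s : ℝ => p * s ^ (p - 1)) (Ioo 0 t) := by
      have h1 : IntervalIntegrable (fun s : ℝ => s ^ (p - 1)) volume 0 t :=
        intervalIntegral.intervalIntegrable_rpow' (by linarith)
      exact (h1.1.mono_set Ioo_subset_Ioc_self).const_mul p
    have e2 : ∫ s in Ioo 0 t, p * s ^ (p - 1) = t ^ p := by
      rw [← MeasureTheory.integral_Ioc_eq_integral_Ioo,
        ← intervalIntegral.integral_of_le (le_of_lt ht),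
        intervalIntegral.integral_const_mul, integral_rpow (Or.inl (by linarith))]
      have hpe : p - 1 + 1 = p := by ring
      rw [hpe, Real.zero_rpow hp.ne']
      field_simp
      rw [sub_zero]
    rw [← ofReal_integral_eq_lintegral_ofReal hInt
        ((ae_restrict_iff' measurableSet_Ioo).2 (Filter.Eventually.of_forall fun s hs =>
          mul_nonneg hp.le (Real.rpow_nonneg hs.1.le _))),
      e2, ← ENNReal.ofReal_mul (Real.rpow_nonneg (le_of_lt ht) _)]
  have step2 : ∀ s ∈ Ioi (0:ℝ), (∫⁻ t, K t s ∂μ) =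
      ENNReal.ofReal p * ENNReal.ofReal (s ^ (p - 1) * F₀ s) := by
    intro s hs
    have e1 : ∀ t, K t s =
        (Ioi s).indicator (fun t => ENNReal.ofReal (f₀ t)) t * ENNReal.ofReal (p * s ^ (p - 1)) := by
      intro t; by_cases h : s < t <;> simp [hK, Set.indicator, h, mul_comm]
    simp only [e1]
    rw [lintegral_mul_const' _ _ ENNReal.ofReal_ne_top, lintegral_indicator measurableSet_Ioi,
      hμ, Measure.restrict_restrict measurableSet_Ioi,
      Set.inter_eq_self_of_subset_left (Ioi_subset_Ioi (le_of_lt hs)), hF₀ s hs,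
      ← ENNReal.ofReal_mul (hF₀0 s), ← ENNReal.ofReal_mul hp.le]
    congr 1
    ring
  have hswap : ∫⁻ t, ENNReal.ofReal (t ^ p * f₀ t) ∂μ =
      ENNReal.ofReal p * ENNReal.ofReal (∫ t in Ioi 0, t ^ (p - 1) * F₀ t) := by
    calc ∫⁻ t, ENNReal.ofReal (t ^ p * f₀ t) ∂μ = ∫⁻ t, (∫⁻ s, K t s ∂μ) ∂μ :=
          setLIntegral_congr_fun measurableSet_Ioi
            (fun t ht => step1 t ht)
      _ = ∫⁻ s, (∫⁻ t, K t s ∂μ) ∂μ := lintegral_lintegral_swap hKm.aemeasurable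
      _ = ∫⁻ s, ENNReal.ofReal p * ENNReal.ofReal (s ^ (p - 1) * F₀ s) ∂μ :=
          setLIntegral_congr_fun measurableSet_Ioi
            (fun s hs => step2 s hs)
      _ = ENNReal.ofReal p * ∫⁻ s, ENNReal.ofReal (s ^ (p - 1) * F₀ s) ∂μ :=
          lintegral_const_mul' _ _ ENNReal.ofReal_ne_top
      _ = ENNReal.ofReal p * ENNReal.ofReal (∫ t in Ioi 0, t ^ (p - 1) * F₀ t) := by
          rw [← ofReal_integral_eq_lintegral_ofReal hF₀int
            ((ae_restrict_iff' measurableSet_Ioi).2 (Filter.Eventually.of_forall fun s hs =>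
              mul_nonneg (Real.rpow_nonneg (le_of_lt hs) _) (hF₀0 s)))]
  have hmeas : AEStronglyMeasurable (fun t : ℝ => t ^ p * f₀ t) μ :=
    ((measurable_id.pow_const p).mul hf₀m).aestronglyMeasurable
  have hnn : 0 ≤ᵐ[μ] fun t : ℝ => t ^ p * f₀ t :=
    (ae_restrict_iff' measurableSet_Ioi).2 (Filter.Eventually.of_forall fun t ht =>
      mul_nonneg (Real.rpow_nonneg (le_of_lt ht) _) (hf₀0 t))
  have hint : Integrable (fun t : ℝ => t ^ p * f₀ t) μ := by
    refine ⟨hmeas, (hasFiniteIntegral_iff_ofReal hnn).2 ?_⟩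
    rw [hswap]
    exact ENNReal.mul_lt_top ENNReal.ofReal_lt_top ENNReal.ofReal_lt_top
  refine ⟨hint, ?_⟩
  rw [integral_eq_lintegral_of_nonneg_ae hnn hmeas, hswap,
    ← ENNReal.ofReal_mul hp.le, ENNReal.toReal_ofReal (mul_nonneg hp.le hIF)]
set_option maxHeartbeats 2000000 in
/-- Let `g_n` be a density generator with cumulative generators `Ḡ_n` and `𝒢̄_n`, and suppose
`∫_{ℝⁿ} ‖z‖² Ḡ_n(‖z‖²/2) dz < ∞`. Then `c_n* ∫_{ℝⁿ} ‖z‖² Ḡ_n(‖z‖²/2) dz = n (c_n*/c_n**)`;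
that is, for `Z ~ E_n(0, I_n, Ḡ_n)`, `E[ZᵀZ] = n c_n*/c_n**`. -/
theorem stmt_5 (n : ℕ) (hn : 1 ≤ n) (g G GG : ℝ → ℝ)
    (hg0 : ∀ t, 0 ≤ g t) (hgm : Measurable g)
    (hg_int : IntegrableOn (fun t : ℝ => t ^ ((n : ℝ) / 2 - 1) * g t) (Ioi 0))
    (hg_pos : 0 < ∫ t in Ioi (0 : ℝ), t ^ ((n : ℝ) / 2 - 1) * g t)
    (hG : ∀ u : ℝ, G u = ∫ v in Ioi u, g v)
    (hG_int : IntegrableOn (fun t : ℝ => t ^ ((n : ℝ) / 2 - 1) * G t) (Ioi 0))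
    (hG_pos : 0 < ∫ t in Ioi (0 : ℝ), t ^ ((n : ℝ) / 2 - 1) * G t)
    (hGG : ∀ u : ℝ, GG u = ∫ v in Ioi u, G v)
    (hGG_int : IntegrableOn (fun t : ℝ => t ^ ((n : ℝ) / 2 - 1) * GG t) (Ioi 0))
    (hGG_pos : 0 < ∫ t in Ioi (0 : ℝ), t ^ ((n : ℝ) / 2 - 1) * GG t)
    (cs css : ℝ)
    (hcs : cs = Real.Gamma ((n : ℝ) / 2) / (2 * π) ^ ((n : ℝ) / 2) *
      (∫ t in Ioi (0 : ℝ), t ^ ((n : ℝ) / 2 - 1) * G t)⁻¹)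
    (hcss : css = Real.Gamma ((n : ℝ) / 2) / (2 * π) ^ ((n : ℝ) / 2) *
      (∫ t in Ioi (0 : ℝ), t ^ ((n : ℝ) / 2 - 1) * GG t)⁻¹)
    (hfin : Integrable (fun z : EuclideanSpace ℝ (Fin n) => ‖z‖ ^ 2 * G (‖z‖ ^ 2 / 2))) :
    cs * (∫ z : EuclideanSpace ℝ (Fin n), ‖z‖ ^ 2 * G (‖z‖ ^ 2 / 2)) = n * (cs / css) := by
  haveI : Nonempty (Fin n) := ⟨⟨0, hn⟩⟩
  have hn0 : (0:ℝ) < n := by exact_mod_cast hn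
  have hp : (0:ℝ) < (n:ℝ)/2 := by positivity
  -- measurable representatives
  have hG' : ∀ u : ℝ, 0 < u → G u = ∫ v in Ioi u, g v := fun u _ => hG u
  have hgint := aux1 ((n:ℝ)/2-1) ((n:ℝ)/2-1) g G hg0 hgm hg_int hG' hG_pos
  obtain ⟨G₀, hG₀m, hG₀0, hG₀val, hG₀lint⟩ := aux2 g hg0 hgm hgint
  have hGeq : ∀ u : ℝ, 0 < u → G u = G₀ u := fun u hu => (hG u).trans (hG₀val u hu)
  have hG₀int : IntegrableOn (fun t : ℝ => t ^ ((n:ℝ)/2 - 1) * G₀ t) (Ioi 0) :=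
    hG_int.congr_fun (fun t ht => by dsimp only; rw [hGeq t ht]) measurableSet_Ioi
  have hGG' : ∀ u : ℝ, 0 < u → GG u = ∫ v in Ioi u, G₀ v := fun u hu => (hGG u).trans
    (setIntegral_congr_fun measurableSet_Ioi fun v hv => hGeq v (lt_trans hu hv))
  have hG₀Ioi := aux1 ((n:ℝ)/2-1) ((n:ℝ)/2-1) G₀ GG hG₀0 hG₀m hG₀int hGG' hGG_pos
  obtain ⟨GG₀, hGG₀m, hGG₀0, hGG₀val, hGG₀lint⟩ := aux2 G₀ hG₀0 hG₀m hG₀Ioi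
  have hGGeq : ∀ u : ℝ, 0 < u → GG u = GG₀ u := fun u hu => (hGG' u hu).trans (hGG₀val u hu)
  have hGG₀int : IntegrableOn (fun t : ℝ => t ^ ((n:ℝ)/2 - 1) * GG₀ t) (Ioi 0) :=
    hGG_int.congr_fun (fun t ht => by dsimp only; rw [hGGeq t ht]) measurableSet_Ioi
  obtain ⟨hIntP, hIh⟩ := aux3 ((n:ℝ)/2) hp G₀ GG₀ hG₀m hG₀0 hGG₀lint hGG₀0 hGG₀int
  have hIGGeq : ∫ t in Ioi (0:ℝ), t ^ ((n:ℝ)/2-1) * GG₀ t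
      = ∫ t in Ioi (0:ℝ), t ^ ((n:ℝ)/2-1) * GG t :=
    setIntegral_congr_fun measurableSet_Ioi fun t ht => by rw [hGGeq t ht]
  -- polar coordinates
  haveI : Nontrivial (EuclideanSpace ℝ (Fin n)) := by
    refine Module.nontrivial_of_finrank_pos (R := ℝ) ?_
    rw [finrank_euclideanSpace_fin]
    omega
  have hpolar := MeasureTheory.integral_fun_norm_addHaar
    (volume : Measure (EuclideanSpace ℝ (Fin n))) (fun r : ℝ => r ^ 2 * G (r ^ 2 / 2))
  rw [finrank_euclideanSpace_fin] at hpolar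
  simp only [smul_eq_mul, nsmul_eq_mul] at hpolar
  -- radial substitution
  set g' : ℝ → ℝ := fun s => s ^ ((n:ℝ)/2) * G₀ (s/2) / 2 with hg'
  have hsub1 : ∫ x in Ioi (0:ℝ), ((2:ℝ) * x ^ ((2:ℝ) - 1)) • g' (x ^ (2:ℝ))
      = ∫ y in Ioi (0:ℝ), g' y :=
    integral_comp_rpow_Ioi_of_pos (g := g') two_pos
  have hptw : EqOn (fun y : ℝ => y ^ (n-1) * (y ^ 2 * G (y ^ 2 / 2)))
      (fun x : ℝ => ((2:ℝ) * x ^ ((2:ℝ) - 1)) • g' (x ^ (2:ℝ))) (Ioi 0) := by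
    intro y hy
    have hy0 : (0:ℝ) < y := hy
    have h2 : y ^ ((2:ℝ)) = y ^ (2:ℕ) := by
      rw [← Real.rpow_natCast y 2]; norm_num
    have hGg : G (y ^ 2 / 2) = G₀ (y ^ 2 / 2) := hGeq _ (by positivity)
    have hyn : (y ^ (2:ℕ)) ^ ((n:ℝ)/2) = y ^ n := by
      rw [← h2, ← Real.rpow_mul hy0.le, ← Real.rpow_natCast y n]
      congr 1
      push_cast
      ring
    have hkey : y ^ (n-1) * y ^ 2 = y * y ^ n := by
      rw [← pow_add, ← pow_succ']
      congr 1; omega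
    simp only [smul_eq_mul, hg']
    rw [show ((2:ℝ) - 1) = (1:ℝ) by norm_num, Real.rpow_one, h2, hyn, hGg]
    calc y ^ (n-1) * (y ^ 2 * G₀ (y ^ 2 / 2)) = (y ^ (n-1) * y ^ 2) * G₀ (y ^ 2 / 2) := by ring
      _ = (y * y ^ n) * G₀ (y ^ 2 / 2) := by rw [hkey]
      _ = 2 * y * (y ^ n * G₀ (y ^ 2 / 2) / 2) := by ring
  have hrad1 : ∫ y in Ioi (0:ℝ), y ^ (n-1) * (y ^ 2 * G (y ^ 2 / 2)) = ∫ y in Ioi (0:ℝ), g' y := by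
    rw [← hsub1]; exact setIntegral_congr_fun measurableSet_Ioi hptw
  have hsub2 : ∫ x in Ioi (0:ℝ), g' ((2:ℝ) * x) = (2:ℝ)⁻¹ • ∫ x in Ioi ((2:ℝ)*0), g' x :=
    integral_comp_mul_left_Ioi g' 0 two_pos
  rw [mul_zero] at hsub2
  have hptw2 : EqOn (fun x : ℝ => g' ((2:ℝ)*x))
      (fun x : ℝ => 2 ^ ((n:ℝ)/2) / 2 * (x ^ ((n:ℝ)/2) * G₀ x)) (Ioi 0) := by
    intro x hx
    simp only [hg']
    rw [Real.mul_rpow (by norm_num) (le_of_lt hx), show (2:ℝ)*x/2 = x by ring]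
    ring
  have hrad : ∫ y in Ioi (0:ℝ), y ^ (n-1) * (y ^ 2 * G (y ^ 2 / 2))
      = 2 ^ ((n:ℝ)/2) * ∫ t in Ioi (0:ℝ), t ^ ((n:ℝ)/2) * G₀ t := by
    have h5 : ∫ x in Ioi (0:ℝ), g' x = 2 * ∫ x in Ioi (0:ℝ), g' ((2:ℝ)*x) := by
      rw [hsub2, smul_eq_mul]; ring
    rw [hrad1, h5, setIntegral_congr_fun measurableSet_Ioi hptw2, integral_const_mul]
    ring
  -- volume of the unit ball
  have hΓ1 : (0:ℝ) < Real.Gamma ((n:ℝ)/2 + 1) := Real.Gamma_pos_of_pos (by positivity)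
  have hball : (volume (Metric.ball (0 : EuclideanSpace ℝ (Fin n)) 1)).toReal
      = Real.sqrt π ^ n / Real.Gamma ((n:ℝ)/2 + 1) := by
    rw [EuclideanSpace.volume_ball]
    rw [ENNReal.toReal_mul, ENNReal.toReal_pow, ENNReal.toReal_ofReal zero_le_one, one_pow,
      one_mul, ENNReal.toReal_ofReal (by positivity)]
    norm_num [Fintype.card_fin]
  -- final arithmetic
  have hΓ : (0:ℝ) < Real.Gamma ((n:ℝ)/2) := Real.Gamma_pos_of_pos hp
  have key1 : Real.Gamma ((n:ℝ)/2 + 1) = ((n:ℝ)/2) * Real.Gamma ((n:ℝ)/2) :=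
    Real.Gamma_add_one hp.ne'
  have key2 : Real.sqrt π ^ n = π ^ ((n:ℝ)/2) := by
    rw [Real.sqrt_eq_rpow, ← Real.rpow_natCast (π ^ ((1:ℝ)/2)) n, ← Real.rpow_mul pi_pos.le]
    congr 1; ring
  have key3 : ((2:ℝ) * π) ^ ((n:ℝ)/2) = 2 ^ ((n:ℝ)/2) * π ^ ((n:ℝ)/2) :=
    Real.mul_rpow (by norm_num) pi_pos.le
  have h2p : (0:ℝ) < (2:ℝ) ^ ((n:ℝ)/2) := Real.rpow_pos_of_pos two_pos _
  have hπp : (0:ℝ) < π ^ ((n:ℝ)/2) := Real.rpow_pos_of_pos pi_pos _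
  have alg : ∀ (Γp P T IG IGG N : ℝ), 0 < Γp → 0 < P → 0 < T → 0 < IG → 0 < IGG → 0 < N →
      Γp / (T * P) * IG⁻¹ * (N * (P / (N / 2 * Γp) * (T * (N / 2 * IGG))))
        = N * ((Γp / (T * P) * IG⁻¹) / (Γp / (T * P) * IGG⁻¹)) := by
    intro Γp P T IG IGG N h1 h2 h3 h4 h5 h6
    field_simp
  rw [hpolar, measureReal_def, hball, hrad, hIh, hIGGeq, hcs, hcss, key1, key2, key3]
  exact alg _ _ _ _ _ _ hΓ hπp h2p hG_pos hGG_pos hn0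
end

section
/- Let X ~ N_n(μ, Σ) be multivariate normal with mean μ and positive definite covariance Σ = (σ_{ij}), and let p₁,…,p_n be nonnegative integers with p₁ ≥ 2 such that all moments below are finite. Then E[∏_{i=1}^n X_i^{p_i}] = σ₁₁ E[X₁^{p₁−2} ∏_{k=2}^n X_k^{p_k}] + μ₁² E[X₁^{p₁−2} ∏_{k=2}^n X_k^{p_k}] + σ₁₁²(p₁−2)(p₁−3) E[X₁^{p₁−4} ∏_{k=2}^n X_k^{p_k}] + 2 Σ_{j=2}^n σ₁₁ σ_{j1}(p₁−2)p_j E[X₁^{p₁−3} X_j^{p_j−1} ∏_{k=2,k≠j}^n X_k^{p_k}] + Σ_{j=2}^n σ_{j1}² p_j(p_j−1) E[X₁^{p₁−2} X_j^{p_j−2} ∏_{k=2,k≠j}^n X_k^{p_k}] + Σ_{j=2}^n Σ_{i=2,i≠j}^n σ_{j1}σ_{i1} p_j p_i E[X_i^{p_i−1} X_j^{p_j−1} X₁^{p₁−2} ∏_{k=2,k≠i,j}^n X_k^{p_k}] + 2μ₁ { σ₁₁(p₁−2) E[X₁^{p₁−3} ∏_{k=2}^n X_k^{p_k}] + Σ_{j=2}^n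 σ_{j1} p_j E[X_j^{p_j−1} X₁^{p₁−2} ∏_{k=2,k≠j}^n X_k^{p_k}] }. -/
open MeasureTheory Real Set Matrix Function

/-- The density of the multivariate normal `N_n(μ, Σ)` with positive definite `Σ`. -/
noncomputable def normalPdf (n : ℕ) (μ : Fin n → ℝ) (S : Matrix (Fin n) (Fin n) ℝ)
    (x : Fin n → ℝ) : ℝ :=
  (2 * π) ^ (-(n : ℝ) / 2) * (Real.sqrt S.det)⁻¹ *
    Real.exp (-(1 / 2) * ((x - μ) ⬝ᵥ S⁻¹.mulVec (x - μ)))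

/-- The product moment `E[∏ᵢ Xᵢ^(qᵢ)]` of `X ~ N_n(μ, Σ)`. -/
noncomputable def nMom (n : ℕ) (μ : Fin n → ℝ) (S : Matrix (Fin n) (Fin n) ℝ)
    (q : Fin n → ℕ) : ℝ :=
  ∫ x : Fin n → ℝ, (∏ k : Fin n, (x k) ^ q k) * normalPdf n μ S x

open Filter Asymptotics

lemma aux_tendsto_pow_exp (m : ℕ) {b : ℝ} (hb : 0 < b) :
    Tendsto (fun t : ℝ => |t| ^ m * Real.exp (-b * t ^ 2)) atTop (nhds 0) := by
  have h1 : Tendsto (fun t : ℝ => t ^ m * Real.exp (-b * t ^ 2)) atTop (nhds 0) := by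
    have h := rpow_mul_exp_neg_mul_sq_isLittleO_exp_neg hb (m : ℝ)
    have h2 : Tendsto (fun x : ℝ => Real.exp (-(1/2) * x)) atTop (nhds 0) := by
      have hb2 : Tendsto (fun x : ℝ => -(1/2) * x) atTop atBot := by
        exact tendsto_id.const_mul_atTop_of_neg (by norm_num)
      exact Real.tendsto_exp_atBot.comp hb2
    have := h.trans_tendsto h2
    simpa [Real.rpow_natCast] using this
  refine h1.congr' ?_
  filter_upwards [eventually_ge_atTop (0:ℝ)] with t ht
  rw [abs_of_nonneg ht]

lemma aux_tendsto_pow_exp_both (m : ℕ) {b : ℝ} (hb : 0 < b) :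
    Tendsto (fun t : ℝ => |t| ^ m * Real.exp (-b * t ^ 2)) atBot (nhds 0) := by
  have := (aux_tendsto_pow_exp m hb).comp tendsto_neg_atBot_atTop
  refine this.congr fun t => ?_
  simp [Function.comp]

/-- main tendsto helper: `D * t^m * exp (-(1/2) * Q t)` tends to 0 at ±∞ when
`Q t = a*(t-s)^2 + B*(t-s) + C` with `a > 0`. -/
lemma aux_tendsto_main (m : ℕ) (D a B C s : ℝ) (ha : 0 < a) (l : Filter ℝ)
    (hl : l = atTop ∨ l = atBot) :
    Tendsto (fun t : ℝ => D * t ^ m * Real.exp (-(1/2) * (a*(t-s)^2 + B*(t-s) + C)))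
      l (nhds 0) := by
  set β : ℝ := a * s - B / 2
  set γ : ℝ := -(a/2)*s^2 + (B/2)*s - C/2
  have key : ∀ t : ℝ, -(1/2) * (a*(t-s)^2 + B*(t-s) + C) ≤ -(a/4) * t^2 + (γ + β^2/a) := by
    intro t
    have h1 : 0 ≤ (a*t - 2*β)^2 := sq_nonneg _
    have h2 : -(1/2) * (a*(t-s)^2 + B*(t-s) + C) = -(a/4)*t^2 + (-(a/4)*t^2 + β*t + γ) := by
      simp only [β, γ]; ring
    rw [h2]
    have : -(a/4)*t^2 + β*t ≤ β^2/a := by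
      have key2 : ∀ b u : ℝ, -(a/4)*u^2 + b*u ≤ b^2/a := by
        intro b u
        rw [le_div_iff₀ ha]
        nlinarith [sq_nonneg (a*u - 2*b)]
      exact key2 β t
    linarith
  have hbound : ∀ t : ℝ,
      ‖D * t ^ m * Real.exp (-(1/2) * (a*(t-s)^2 + B*(t-s) + C))‖
        ≤ (|D| * Real.exp (γ + β^2/a)) * (|t| ^ m * Real.exp (-(a/4) * t^2)) := by
    intro t
    have := Real.exp_le_exp.2 (key t)
    rw [Real.exp_add] at this
    calc ‖D * t ^ m * Real.exp (-(1/2) * (a*(t-s)^2 + B*(t-s) + C))‖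
        = |D| * |t|^m * Real.exp (-(1/2) * (a*(t-s)^2 + B*(t-s) + C)) := by
          rw [Real.norm_eq_abs, abs_mul, abs_mul, abs_pow, abs_of_pos (Real.exp_pos _)]
      _ ≤ |D| * |t|^m * (Real.exp (-(a/4)*t^2) * Real.exp (γ + β^2/a)) := by
          apply mul_le_mul_of_nonneg_left this (by positivity)
      _ = (|D| * Real.exp (γ + β^2/a)) * (|t| ^ m * Real.exp (-(a/4) * t^2)) := by ring
  have ha4 : 0 < a/4 := by linarith
  rcases hl with rfl | rfl
  · refine squeeze_zero_norm hbound ?_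
    simpa using ((aux_tendsto_pow_exp m ha4).const_mul (|D| * Real.exp (γ + β^2/a)))
  · refine squeeze_zero_norm hbound ?_
    simpa using ((aux_tendsto_pow_exp_both m ha4).const_mul (|D| * Real.exp (γ + β^2/a)))



section
variable {n : ℕ} {μ : Fin n → ℝ} {S : Matrix (Fin n) (Fin n) ℝ}

lemma update_eq_add_smul (x : Fin n → ℝ) (k : Fin n) (t : ℝ) :
    update x k t = x + (t - x k) • (Pi.single k 1 : Fin n → ℝ) := by
  funext i
  by_cases h : i = k
  · subst h; simp
  · simp [h, Pi.single_apply, h]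

lemma quad_expand (M : Matrix (Fin n) (Fin n) ℝ) (x : Fin n → ℝ) (k : Fin n) (t : ℝ) :
    (update x k t - μ) ⬝ᵥ M.mulVec (update x k t - μ)
      = M k k * (t - x k)^2
        + (((Pi.single k 1 : Fin n → ℝ) ⬝ᵥ M.mulVec (x - μ)) + ((x - μ) ⬝ᵥ M.mulVec ((Pi.single k 1 : Fin n → ℝ)))) * (t - x k)
        + (x - μ) ⬝ᵥ M.mulVec (x - μ) := by
  have h1 : update x k t - μ = (x - μ) + (t - x k) • (Pi.single k 1 : Fin n → ℝ) := by
    rw [update_eq_add_smul]; abel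
  rw [h1]
  set w := x - μ
  set c := t - x k
  set d := (Pi.single k 1 : Fin n → ℝ)
  have hd : d ⬝ᵥ M.mulVec d = M k k := by
    simp [d, single_dotProduct, Matrix.mulVec_single]
  rw [Matrix.mulVec_add, Matrix.mulVec_smul, dotProduct_add, add_dotProduct,
    add_dotProduct, dotProduct_smul, smul_dotProduct,
    smul_dotProduct, dotProduct_smul, hd]
  simp only [smul_eq_mul]
  ring

lemma Mkk_pos (hS : S.PosDef) (k : Fin n) : 0 < S⁻¹ k k := by
  have hM : (S⁻¹).PosDef := hS.inv
  have h := hM.dotProduct_mulVec_pos (by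
    intro h
    have := congrFun h k
    simp at this : (Pi.single k 1 : Fin n → ℝ) ≠ 0)
  simpa [single_dotProduct, Matrix.mulVec_single] using h

lemma prod_update_pow (q : Fin n → ℕ) (x : Fin n → ℝ) (k : Fin n) (t : ℝ) :
    (∏ i : Fin n, (update x k t) i ^ q i)
      = t ^ q k * ∏ i ∈ Finset.univ.erase k, x i ^ q i := by
  have h : (fun i => (update x k t i) ^ q i) = update (fun i => x i ^ q i) k (t ^ q k) := by
    funext i
    by_cases h : i = k
    · subst h; simp
    · simp [h]
  rw [h, Finset.prod_update_of_mem (Finset.mem_univ k)]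
  congr 1
  rw [Finset.sdiff_singleton_eq_erase]

lemma section_tendsto (hS : S.PosDef) (q : Fin n → ℕ) (k : Fin n) (x : Fin n → ℝ)
    (l : Filter ℝ) (hl : l = atTop ∨ l = atBot) :
    Tendsto (fun t : ℝ => (∏ i : Fin n, (update x k t) i ^ q i) * normalPdf n μ S (update x k t))
      l (nhds 0) := by
  have key := aux_tendsto_main (q k)
    ((∏ i ∈ Finset.univ.erase k, x i ^ q i) * ((2 * π) ^ (-(n : ℝ) / 2) * (Real.sqrt S.det)⁻¹))
    (S⁻¹ k k)
    (((Pi.single k 1 : Fin n → ℝ) ⬝ᵥ S⁻¹.mulVec (x - μ)) + ((x - μ) ⬝ᵥ S⁻¹.mulVec (Pi.single k 1 : Fin n → ℝ)))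
    ((x - μ) ⬝ᵥ S⁻¹.mulVec (x - μ)) (x k) (Mkk_pos hS k) l hl
  refine key.congr fun t => ?_
  rw [prod_update_pow]
  unfold normalPdf
  rw [quad_expand S⁻¹ x k t]
  ring

lemma quad_hasDerivAt (M : Matrix (Fin n) (Fin n) ℝ) (hM : Mᵀ = M)
    (x : Fin n → ℝ) (k : Fin n) (t : ℝ) :
    HasDerivAt (fun t : ℝ => (update x k t - μ) ⬝ᵥ M.mulVec (update x k t - μ))
      (2 * (M.mulVec (update x k t - μ)) k) t := by
  have hv : ∀ i : Fin n, HasDerivAt (fun t : ℝ => update x k t i - μ i)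
      (if i = k then 1 else 0) t := by
    intro i
    by_cases h : i = k
    · subst h
      simp only [update_self, if_pos rfl]
      simpa using (hasDerivAt_id t).sub_const (μ i)
    · simp only [update_of_ne h, if_neg h]
      exact hasDerivAt_const t _
  have hsum : HasDerivAt
      (fun t : ℝ => ∑ i : Fin n, (update x k t i - μ i) *
        (∑ j : Fin n, M i j * (update x k t j - μ j)))
      (∑ i : Fin n, ((if i = k then (1:ℝ) else 0) *
          (∑ j : Fin n, M i j * (update x k t j - μ j))
        + (update x k t i - μ i) * (∑ j : Fin n, M i j * (if j = k then (1:ℝ) else 0)))) t := by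
    apply HasDerivAt.fun_sum
    intro i _
    refine (hv i).mul (HasDerivAt.fun_sum fun j _ => ?_)
    simpa using (hasDerivAt_const t (M i j)).fun_mul (hv j)
  have heq : (∑ i : Fin n, ((if i = k then (1:ℝ) else 0) *
          (∑ j : Fin n, M i j * (update x k t j - μ j))
        + (update x k t i - μ i) * (∑ j : Fin n, M i j * (if j = k then (1:ℝ) else 0))))
      = 2 * (M.mulVec (update x k t - μ)) k := by
    rw [Finset.sum_add_distrib]
    have e1 : (∑ i : Fin n, (if i = k then (1:ℝ) else 0) *
        (∑ j : Fin n, M i j * (update x k t j - μ j)))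
        = ∑ j : Fin n, M k j * (update x k t j - μ j) := by
      rw [Finset.sum_eq_single k]
      · simp
      · intro b _ hb; simp [hb]
      · simp
    have e2 : (∑ i : Fin n, (update x k t i - μ i) *
        (∑ j : Fin n, M i j * (if j = k then (1:ℝ) else 0)))
        = ∑ i : Fin n, (update x k t i - μ i) * M i k := by
      apply Finset.sum_congr rfl
      intro i _
      congr 1
      rw [Finset.sum_eq_single k]
      · simp
      · intro b _ hb; simp [hb]
      · simp
    rw [e1, e2]
    have e3 : ∀ i, M i k = M k i := fun i =>
      (Matrix.transpose_apply M k i).symm.trans (congrFun (congrFun hM k) i)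
    simp only [Matrix.mulVec, dotProduct, Pi.sub_apply]
    rw [two_mul]
    congr 1
    apply Finset.sum_congr rfl
    intro i _
    rw [e3, mul_comm]
  rw [heq] at hsum
  have hfe : (fun t : ℝ => (update x k t - μ) ⬝ᵥ M.mulVec (update x k t - μ))
      = fun t : ℝ => ∑ i : Fin n, (update x k t i - μ i) *
          (∑ j : Fin n, M i j * (update x k t j - μ j)) := by
    funext t
    simp [dotProduct, Matrix.mulVec, Pi.sub_apply]
  rw [hfe]
  exact hsum

lemma pdf_hasDerivAt (hS : S.PosDef) (x : Fin n → ℝ) (k : Fin n) (t : ℝ) :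
    HasDerivAt (fun t : ℝ => normalPdf n μ S (update x k t))
      (-(S⁻¹.mulVec (update x k t - μ) k) * normalPdf n μ S (update x k t)) t := by
  have hM : (S⁻¹)ᵀ = S⁻¹ := by
    have h := hS.posSemidef.isHermitian.inv
    simpa [Matrix.IsHermitian, Matrix.conjTranspose_eq_transpose_of_trivial] using h
  have hq := quad_hasDerivAt (μ := μ) S⁻¹ hM x k t
  have h2 := ((hq.const_mul (-(1/2) : ℝ)).exp).const_mul
    ((2 * π) ^ (-(n : ℝ) / 2) * (Real.sqrt S.det)⁻¹)
  have hfun : (fun y : ℝ => (2 * π) ^ (-(n:ℝ) / 2) * (Real.sqrt S.det)⁻¹ *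
      Real.exp (-(1 / 2) * ((update x k y - μ) ⬝ᵥ S⁻¹.mulVec (update x k y - μ))))
      = fun t : ℝ => normalPdf n μ S (update x k t) := by
    funext y
    unfold normalPdf
    ring_nf
  have hd : ((2 * π) ^ (-(n:ℝ) / 2) * (Real.sqrt S.det)⁻¹ *
      (Real.exp (-(1 / 2) * ((update x k t - μ) ⬝ᵥ S⁻¹.mulVec (update x k t - μ))) *
        (-(1 / 2) * (2 * (S⁻¹.mulVec (update x k t - μ)) k))))
      = -(S⁻¹.mulVec (update x k t - μ) k) * normalPdf n μ S (update x k t) := by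
    unfold normalPdf
    ring
  rw [hfun, hd] at h2
  exact h2

noncomputable def Gfun (n : ℕ) (μ : Fin n → ℝ) (S : Matrix (Fin n) (Fin n) ℝ)
    (q : Fin n → ℕ) (k : Fin n) : (Fin n → ℝ) → ℝ := fun y =>
  ((q k : ℝ) * y k ^ (q k - 1) * ∏ i ∈ Finset.univ.erase k, y i ^ q i) * normalPdf n μ S y
  - (∏ i : Fin n, y i ^ q i) * ((S⁻¹.mulVec (y - μ)) k) * normalPdf n μ S y

lemma prod_pow_update (y : Fin n → ℝ) (q : Fin n → ℕ) (k : Fin n) (a : ℕ) :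
    (∏ i : Fin n, y i ^ (update q k a i))
      = y k ^ a * ∏ i ∈ Finset.univ.erase k, y i ^ q i := by
  have h : (fun i => y i ^ (update q k a i)) = update (fun i => y i ^ q i) k (y k ^ a) := by
    funext i
    by_cases h : i = k
    · subst h; simp
    · simp [h]
  rw [h, Finset.prod_update_of_mem (Finset.mem_univ k)]
  congr 1
  rw [Finset.sdiff_singleton_eq_erase]

lemma H_hasDerivAt (hS : S.PosDef) (q : Fin n → ℕ) (k : Fin n) (x : Fin n → ℝ) (t : ℝ) :
    HasDerivAt (fun t : ℝ => (∏ i : Fin n, (update x k t) i ^ q i) * normalPdf n μ S (update x k t))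
      (Gfun n μ S q k (update x k t)) t := by
  have hmono : HasDerivAt (fun t : ℝ => ∏ i : Fin n, (update x k t) i ^ q i)
      ((q k : ℝ) * t ^ (q k - 1) * ∏ i ∈ Finset.univ.erase k, x i ^ q i) t := by
    have hfe : (fun t : ℝ => ∏ i : Fin n, (update x k t) i ^ q i)
        = fun t : ℝ => t ^ q k * ∏ i ∈ Finset.univ.erase k, x i ^ q i := by
      funext s; exact prod_update_pow q x k s
    rw [hfe]
    exact (hasDerivAt_pow (q k) t).mul_const _
  have hmul := hmono.mul (pdf_hasDerivAt (μ := μ) hS x k t)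
  refine hmul.congr_deriv ?_
  unfold Gfun
  have e1 : update x k t k = t := update_self k t x
  have e2 : (∏ i ∈ Finset.univ.erase k, (update x k t) i ^ q i)
      = ∏ i ∈ Finset.univ.erase k, x i ^ q i := by
    refine Finset.prod_congr rfl fun i hi => ?_
    rw [update_of_ne (Finset.mem_erase.1 hi).1]
  rw [e1, e2]
  ring

lemma Gfun_integrable (q : Fin n → ℕ) (k : Fin n)
    (hfin : ∀ q : Fin n → ℕ,
      Integrable (fun x : Fin n → ℝ => (∏ i : Fin n, (x i) ^ q i) * normalPdf n μ S x)) :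
    Integrable (Gfun n μ S q k) := by
  have heq : Gfun n μ S q k = fun y =>
      (q k : ℝ) * ((∏ i : Fin n, y i ^ (update q k (q k - 1)) i) * normalPdf n μ S y)
      - ∑ l : Fin n, (S⁻¹ k l * ((∏ i : Fin n, y i ^ (update q l (q l + 1)) i) * normalPdf n μ S y)
          - S⁻¹ k l * μ l * ((∏ i : Fin n, y i ^ q i) * normalPdf n μ S y)) := by
    funext y
    unfold Gfun
    rw [prod_pow_update y q k (q k - 1)]
    have hl : ∀ l : Fin n, (∏ i : Fin n, y i ^ (update q l (q l + 1)) i)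
        = y l * ∏ i : Fin n, y i ^ q i := by
      intro l
      rw [prod_pow_update y q l (q l + 1), pow_succ]
      rw [← Finset.mul_prod_erase Finset.univ (fun i => y i ^ q i) (Finset.mem_univ l)]
      ring
    have hmv : (S⁻¹.mulVec (y - μ)) k = ∑ l : Fin n, S⁻¹ k l * (y l - μ l) := by
      simp [Matrix.mulVec, dotProduct]
    simp only [hl, hmv]
    rw [Finset.mul_sum, Finset.sum_mul]
    congr 1
    · ring
    · refine Finset.sum_congr rfl fun l _ => by ring
  rw [heq]
  exact ((hfin _).const_mul _).sub (integrable_finset_sum _ fun l _ =>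
    ((hfin _).const_mul _).sub ((hfin _).const_mul _))

lemma insertNth_eq_update {m : ℕ} (k : Fin (m+1)) (y : Fin m → ℝ) (t : ℝ) :
    (k.insertNth t y : Fin (m+1) → ℝ) = update (k.insertNth (0:ℝ) y : Fin (m+1) → ℝ) k t := by
  funext i
  by_cases h : i = k
  · subst h; simp
  · obtain ⟨j, rfl⟩ := Fin.exists_succAbove_eq h
    rw [update_of_ne h, Fin.insertNth_apply_succAbove, Fin.insertNth_apply_succAbove]

lemma integral_G_zero (hn : 0 < n) (hS : S.PosDef)
    (hfin : ∀ q : Fin n → ℕ,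
      Integrable (fun x : Fin n → ℝ => (∏ i : Fin n, (x i) ^ q i) * normalPdf n μ S x))
    (q : Fin n → ℕ) (k : Fin n) :
    (∫ x : Fin n → ℝ, Gfun n μ S q k x) = 0 := by
  obtain ⟨m, rfl⟩ : ∃ m, n = m + 1 := ⟨n - 1, by omega⟩
  set G := Gfun (m+1) μ S q k with hG
  have hGint : Integrable G := Gfun_integrable q k hfin
  set e := MeasurableEquiv.piFinSuccAbove (fun _ : Fin (m+1) => ℝ) k with he
  have mp : MeasurePreserving e volume volume := volume_preserving_piFinSuccAbove _ k
  have hsymm : ∀ z : ℝ × (Fin m → ℝ), e.symm z = k.insertNth z.1 z.2 := by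
    intro z
    rw [he, MeasurableEquiv.piFinSuccAbove_symm_apply]
    rfl
  have h1 : (∫ x : Fin (m+1) → ℝ, G x) = ∫ z : ℝ × (Fin m → ℝ), G (e.symm z) := by
    rw [← mp.integral_comp e.measurableEmbedding (fun z => G (e.symm z))]
    simp
  have hg : Integrable (fun z : ℝ × (Fin m → ℝ) => G (e.symm z)) volume :=
    ((mp.symm e).integrable_comp_emb e.symm.measurableEmbedding).2 hGint
  rw [h1]
  rw [MeasureTheory.Measure.volume_eq_prod] at hg ⊢
  rw [MeasureTheory.integral_prod_symm _ hg]
  rw [← MeasureTheory.integral_zero (Fin m → ℝ) ℝ]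
  apply MeasureTheory.integral_congr_ae
  filter_upwards [hg.prod_left_ae] with y hy
  set x0 : Fin (m+1) → ℝ := k.insertNth 0 y with hx0
  have hupd : ∀ t : ℝ, e.symm (t, y) = update x0 k t := by
    intro t
    rw [hsymm (t, y), hx0]
    exact insertNth_eq_update k y t
  have hsec : (fun t : ℝ => G (e.symm (t, y))) = fun t : ℝ => G (update x0 k t) := by
    funext t; rw [hupd t]
  have hint : Integrable (fun t : ℝ => G (update x0 k t)) volume := by
    rw [← hsec]; exact hy
  have hderiv : ∀ t : ℝ, HasDerivAt
      (fun t : ℝ => (∏ i : Fin (m+1), (update x0 k t) i ^ q i) * normalPdf (m+1) μ S (update x0 k t))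
      (G (update x0 k t)) t := fun t => H_hasDerivAt hS q k x0 t
  have htop : Tendsto
      (fun t : ℝ => (∏ i : Fin (m+1), (update x0 k t) i ^ q i) * normalPdf (m+1) μ S (update x0 k t))
      atTop (nhds 0) := section_tendsto hS q k x0 atTop (Or.inl rfl)
  have hbot : Tendsto
      (fun t : ℝ => (∏ i : Fin (m+1), (update x0 k t) i ^ q i) * normalPdf (m+1) μ S (update x0 k t))
      atBot (nhds 0) := section_tendsto hS q k x0 atBot (Or.inr rfl)
  have hIoi := integral_Ioi_of_hasDerivAt_of_tendsto' (a := 0)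
    (fun t _ => hderiv t) hint.integrableOn htop
  have hIic := integral_Iic_of_hasDerivAt_of_tendsto' (a := 0)
    (fun t _ => hderiv t) hint.integrableOn hbot
  calc (∫ t : ℝ, G (e.symm (t, y))) = ∫ t : ℝ, G (update x0 k t) := by rw [hsec]
    _ = (∫ t in Iic (0:ℝ), G (update x0 k t)) + ∫ t in Ioi (0:ℝ), G (update x0 k t) :=
        (intervalIntegral.integral_Iic_add_Ioi hint.integrableOn hint.integrableOn).symm
    _ = 0 := by rw [hIoi, hIic]; ring

lemma T2_integrable (q : Fin n → ℕ) (k : Fin n)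
    (hfin : ∀ q : Fin n → ℕ,
      Integrable (fun x : Fin n → ℝ => (∏ i : Fin n, (x i) ^ q i) * normalPdf n μ S x)) :
    Integrable (fun x : Fin n → ℝ =>
      (∏ i : Fin n, x i ^ q i) * ((S⁻¹.mulVec (x - μ)) k) * normalPdf n μ S x) := by
  have heq : (fun x : Fin n → ℝ =>
      (∏ i : Fin n, x i ^ q i) * ((S⁻¹.mulVec (x - μ)) k) * normalPdf n μ S x)
      = fun y => ∑ l : Fin n,
          (S⁻¹ k l * ((∏ i : Fin n, y i ^ (update q l (q l + 1)) i) * normalPdf n μ S y)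
          - S⁻¹ k l * μ l * ((∏ i : Fin n, y i ^ q i) * normalPdf n μ S y)) := by
    funext y
    have hl : ∀ l : Fin n, (∏ i : Fin n, y i ^ (update q l (q l + 1)) i)
        = y l * ∏ i : Fin n, y i ^ q i := by
      intro l
      rw [prod_pow_update y q l (q l + 1), pow_succ]
      rw [← Finset.mul_prod_erase Finset.univ (fun i => y i ^ q i) (Finset.mem_univ l)]
      ring
    have hmv : (S⁻¹.mulVec (y - μ)) k = ∑ l : Fin n, S⁻¹ k l * (y l - μ l) := by
      simp [Matrix.mulVec, dotProduct]
    simp only [hl, hmv]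
    rw [Finset.mul_sum, Finset.sum_mul]
    refine Finset.sum_congr rfl fun l _ => by ring
  rw [heq]
  exact integrable_finset_sum _ fun l _ =>
    ((hfin _).const_mul _).sub ((hfin _).const_mul _)

lemma key_identity (hn : 0 < n) (hS : S.PosDef)
    (hfin : ∀ q : Fin n → ℕ,
      Integrable (fun x : Fin n → ℝ => (∏ i : Fin n, (x i) ^ q i) * normalPdf n μ S x))
    (q : Fin n → ℕ) (k : Fin n) :
    (∫ x : Fin n → ℝ, (∏ i : Fin n, x i ^ q i) * ((S⁻¹.mulVec (x - μ)) k) * normalPdf n μ S x)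
      = (q k : ℝ) * nMom n μ S (update q k (q k - 1)) := by
  have h0 := integral_G_zero hn hS hfin q k
  have hT2 := T2_integrable q k hfin
  have hT1 : Integrable (fun x : Fin n → ℝ =>
      (q k : ℝ) * ((∏ i : Fin n, x i ^ (update q k (q k - 1)) i) * normalPdf n μ S x)) :=
    (hfin _).const_mul _
  have hGeq : Gfun n μ S q k = fun x =>
      (q k : ℝ) * ((∏ i : Fin n, x i ^ (update q k (q k - 1)) i) * normalPdf n μ S x)
      - (∏ i : Fin n, x i ^ q i) * ((S⁻¹.mulVec (x - μ)) k) * normalPdf n μ S x := by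
    funext x
    unfold Gfun
    rw [prod_pow_update x q k (q k - 1)]
    ring
  rw [hGeq, MeasureTheory.integral_sub hT1 hT2, MeasureTheory.integral_const_mul] at h0
  unfold nMom
  linarith

lemma stein (hn : 0 < n) (hS : S.PosDef)
    (hfin : ∀ q : Fin n → ℕ,
      Integrable (fun x : Fin n → ℝ => (∏ i : Fin n, (x i) ^ q i) * normalPdf n μ S x))
    (q : Fin n → ℕ) (j : Fin n) :
    nMom n μ S (update q j (q j + 1)) = μ j * nMom n μ S q
      + ∑ k : Fin n, S j k * (q k : ℝ) * nMom n μ S (update q k (q k - 1)) := by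
  have hdet : IsUnit S.det := by
    simpa [isUnit_iff_ne_zero] using hS.det_pos.ne'
  have hSM : ∀ x : Fin n → ℝ, x j - μ j = ∑ k : Fin n, S j k * (S⁻¹.mulVec (x - μ)) k := by
    intro x
    have h1 : S.mulVec (S⁻¹.mulVec (x - μ)) = x - μ := by
      rw [Matrix.mulVec_mulVec, Matrix.mul_nonsing_inv S hdet, Matrix.one_mulVec]
    have h2 := congrFun h1 j
    simp only [Matrix.mulVec, dotProduct, Pi.sub_apply] at h2
    rw [← h2]
    refine Finset.sum_congr rfl fun l _ => rfl
  have hfe : (fun x : Fin n → ℝ => (∏ i : Fin n, x i ^ (update q j (q j + 1)) i) * normalPdf n μ S x)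
      = fun x => μ j * ((∏ i : Fin n, x i ^ q i) * normalPdf n μ S x)
        + ∑ k : Fin n, S j k *
            ((∏ i : Fin n, x i ^ q i) * ((S⁻¹.mulVec (x - μ)) k) * normalPdf n μ S x) := by
    funext x
    have hprod : (∏ i : Fin n, x i ^ (update q j (q j + 1)) i)
        = x j * ∏ i : Fin n, x i ^ q i := by
      rw [prod_pow_update x q j (q j + 1), pow_succ]
      rw [← Finset.mul_prod_erase Finset.univ (fun i => x i ^ q i) (Finset.mem_univ j)]
      ring
    rw [hprod]
    have hx : x j = μ j + ∑ k : Fin n, S j k * (S⁻¹.mulVec (x - μ)) k := by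
      have := hSM x; linarith
    calc (x j * ∏ i : Fin n, x i ^ q i) * normalPdf n μ S x
        = μ j * ((∏ i : Fin n, x i ^ q i) * normalPdf n μ S x)
          + (∑ k : Fin n, S j k * (S⁻¹.mulVec (x - μ)) k) *
              ((∏ i : Fin n, x i ^ q i) * normalPdf n μ S x) := by rw [hx]; ring
      _ = _ := by
          rw [Finset.sum_mul]
          congr 1
          refine Finset.sum_congr rfl fun k _ => by ring
  unfold nMom
  rw [hfe]
  rw [MeasureTheory.integral_add ((hfin q).const_mul _)
    (integrable_finset_sum _ fun k _ => (T2_integrable q k hfin).const_mul _)]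
  rw [MeasureTheory.integral_const_mul, MeasureTheory.integral_finset_sum _
    (fun k _ => (T2_integrable q k hfin).const_mul _)]
  congr 1
  refine Finset.sum_congr rfl fun k _ => ?_
  rw [MeasureTheory.integral_const_mul, key_identity hn hS hfin q k]
  unfold nMom
  ring

end


/-- Product-moment recursion for the multivariate normal distribution (normal case of
Corollary 1): for nonnegative integers `p₁,…,p_n` with `p₁ ≥ 2`, all moments being finite,
`E[∏ Xᵢ^(pᵢ)] = σ₁₁E[X₁^(p₁-2)∏] + μ₁²E[X₁^(p₁-2)∏] + σ₁₁²(p₁-2)(p₁-3)E[X₁^(p₁-4)∏]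
 + 2Σⱼσ₁₁σ_{j1}(p₁-2)pⱼE[X₁^(p₁-3)Xⱼ^(pⱼ-1)∏] + Σⱼσ_{j1}²pⱼ(pⱼ-1)E[X₁^(p₁-2)Xⱼ^(pⱼ-2)∏]
 + ΣⱼΣ_{i≠j}σ_{j1}σ_{i1}pⱼpᵢE[Xᵢ^(pᵢ-1)Xⱼ^(pⱼ-1)X₁^(p₁-2)∏]
 + 2μ₁{σ₁₁(p₁-2)E[X₁^(p₁-3)∏] + Σⱼσ_{j1}pⱼE[Xⱼ^(pⱼ-1)X₁^(p₁-2)∏]}`. -/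
theorem stmt_9 (n : ℕ) (hn : 0 < n) (i1 : Fin n) (hi1 : i1 = ⟨0, hn⟩)
    (μ : Fin n → ℝ) (S : Matrix (Fin n) (Fin n) ℝ) (hS : S.PosDef)
    (p : Fin n → ℕ) (hp : 2 ≤ p i1)
    (hfin : ∀ q : Fin n → ℕ,
      Integrable (fun x : Fin n → ℝ => (∏ k : Fin n, (x k) ^ q k) * normalPdf n μ S x)) :
    nMom n μ S p =
      S i1 i1 * nMom n μ S (update p i1 (p i1 - 2))
      + (μ i1) ^ 2 * nMom n μ S (update p i1 (p i1 - 2))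
      + S i1 i1 ^ 2 * ((p i1 : ℝ) - 2) * ((p i1 : ℝ) - 3) * nMom n μ S (update p i1 (p i1 - 4))
      + 2 * ∑ j ∈ Finset.univ.erase i1,
          S i1 i1 * S j i1 * ((p i1 : ℝ) - 2) * (p j : ℝ) *
            nMom n μ S (update (update p i1 (p i1 - 3)) j (p j - 1))
      + ∑ j ∈ Finset.univ.erase i1,
          (S j i1) ^ 2 * (p j : ℝ) * ((p j : ℝ) - 1) *
            nMom n μ S (update (update p i1 (p i1 - 2)) j (p j - 2))
      + ∑ j ∈ Finset.univ.erase i1, ∑ i ∈ (Finset.univ.erase i1).erase j,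
          S j i1 * S i i1 * (p j : ℝ) * (p i : ℝ) *
            nMom n μ S (update (update (update p i1 (p i1 - 2)) j (p j - 1)) i (p i - 1))
      + 2 * μ i1 *
          (S i1 i1 * ((p i1 : ℝ) - 2) * nMom n μ S (update p i1 (p i1 - 3))
           + ∑ j ∈ Finset.univ.erase i1,
               S j i1 * (p j : ℝ) *
                 nMom n μ S (update (update p i1 (p i1 - 2)) j (p j - 1))) := by
  clear hi1
  have hsym : ∀ j, S i1 j = S j i1 := fun j => by
    have h := hS.isHermitian.apply j i1
    simpa using h
  have c1 : ((p i1 - 1 : ℕ) : ℝ) = (p i1 : ℝ) - 1 := by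
    rw [Nat.cast_sub (by omega)]; norm_num
  have c2 : ((p i1 - 2 : ℕ) : ℝ) = (p i1 : ℝ) - 2 := by
    rw [Nat.cast_sub (by omega)]; norm_num
  -- step 1
  have h1 : nMom n μ S p = μ i1 * nMom n μ S (update p i1 (p i1 - 1))
      + S i1 i1 * ((p i1 : ℝ) - 1) * nMom n μ S (update p i1 (p i1 - 2))
      + ∑ k ∈ Finset.univ.erase i1, S k i1 * (p k : ℝ) *
          nMom n μ S (update (update p i1 (p i1 - 1)) k (p k - 1)) := by
    have hst := stein hn hS hfin (update p i1 (p i1 - 1)) i1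
    have e1 : update (update p i1 (p i1 - 1)) i1 (update p i1 (p i1 - 1) i1 + 1) = p := by
      funext i
      simp only [update_apply]
      split_ifs <;> (try subst_vars) <;> first | rfl | omega | simp_all
    rw [e1] at hst
    rw [hst, ← Finset.add_sum_erase _ _ (Finset.mem_univ i1)]
    have ei1 : update (update p i1 (p i1 - 1)) i1 (update p i1 (p i1 - 1) i1 - 1)
        = update p i1 (p i1 - 2) := by
      funext i
      simp only [update_apply]
      split_ifs <;> (try subst_vars) <;> first | rfl | omega | simp_all
    rw [ei1]
    have hc : ((update p i1 (p i1 - 1) i1 : ℕ) : ℝ) = (p i1 : ℝ) - 1 := by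
      rw [update_self]; exact c1
    rw [hc]
    have hsum : ∑ k ∈ Finset.univ.erase i1, S i1 k * ((update p i1 (p i1 - 1) k : ℕ) : ℝ) *
          nMom n μ S (update (update p i1 (p i1 - 1)) k (update p i1 (p i1 - 1) k - 1))
        = ∑ k ∈ Finset.univ.erase i1, S k i1 * (p k : ℝ) *
          nMom n μ S (update (update p i1 (p i1 - 1)) k (p k - 1)) := by
      refine Finset.sum_congr rfl fun k hk => ?_
      have hkne : k ≠ i1 := (Finset.mem_erase.1 hk).1
      rw [update_of_ne hkne, hsym k]
    rw [hsum]
    ring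
  -- step 2
  have h2 : nMom n μ S (update p i1 (p i1 - 1)) = μ i1 * nMom n μ S (update p i1 (p i1 - 2))
      + S i1 i1 * ((p i1 : ℝ) - 2) * nMom n μ S (update p i1 (p i1 - 3))
      + ∑ k ∈ Finset.univ.erase i1, S k i1 * (p k : ℝ) *
          nMom n μ S (update (update p i1 (p i1 - 2)) k (p k - 1)) := by
    have hst := stein hn hS hfin (update p i1 (p i1 - 2)) i1
    have e2 : update (update p i1 (p i1 - 2)) i1 (update p i1 (p i1 - 2) i1 + 1)
        = update p i1 (p i1 - 1) := by
      funext i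
      simp only [update_apply]
      split_ifs <;> (try subst_vars) <;> first | rfl | omega | simp_all
    rw [e2] at hst
    rw [hst, ← Finset.add_sum_erase _ _ (Finset.mem_univ i1)]
    have ei1 : update (update p i1 (p i1 - 2)) i1 (update p i1 (p i1 - 2) i1 - 1)
        = update p i1 (p i1 - 3) := by
      funext i
      simp only [update_apply]
      split_ifs <;> (try subst_vars) <;> first | rfl | omega | simp_all
    rw [ei1]
    have hc : ((update p i1 (p i1 - 2) i1 : ℕ) : ℝ) = (p i1 : ℝ) - 2 := by
      rw [update_self]; exact c2
    rw [hc]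
    have hsum : ∑ k ∈ Finset.univ.erase i1, S i1 k * ((update p i1 (p i1 - 2) k : ℕ) : ℝ) *
          nMom n μ S (update (update p i1 (p i1 - 2)) k (update p i1 (p i1 - 2) k - 1))
        = ∑ k ∈ Finset.univ.erase i1, S k i1 * (p k : ℝ) *
          nMom n μ S (update (update p i1 (p i1 - 2)) k (p k - 1)) := by
      refine Finset.sum_congr rfl fun k hk => ?_
      have hkne : k ≠ i1 := (Finset.mem_erase.1 hk).1
      rw [update_of_ne hkne, hsym k]
    rw [hsum]
    ring
  -- step 3 : expansion of S11*(p1-2)*Nr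
  have hr2 : S i1 i1 * ((p i1 : ℝ) - 2) * nMom n μ S (update p i1 (p i1 - 2))
      = μ i1 * (S i1 i1 * ((p i1 : ℝ) - 2)) * nMom n μ S (update p i1 (p i1 - 3))
      + S i1 i1 ^ 2 * ((p i1 : ℝ) - 2) * ((p i1 : ℝ) - 3) * nMom n μ S (update p i1 (p i1 - 4))
      + S i1 i1 * ((p i1 : ℝ) - 2) *
          ∑ l ∈ Finset.univ.erase i1, S l i1 * (p l : ℝ) *
            nMom n μ S (update (update p i1 (p i1 - 3)) l (p l - 1)) := by
    rcases Nat.lt_or_ge (p i1) 3 with h3 | h3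
    · have hz : (p i1 : ℝ) - 2 = 0 := by
        have : p i1 = 2 := by omega
        rw [this]; norm_num
      rw [hz]; ring
    · have hst := stein hn hS hfin (update p i1 (p i1 - 3)) i1
      have e3 : update (update p i1 (p i1 - 3)) i1 (update p i1 (p i1 - 3) i1 + 1)
          = update p i1 (p i1 - 2) := by
        funext i
        simp only [update_apply]
        split_ifs <;> (try subst_vars) <;> first | rfl | omega | simp_all
      rw [e3] at hst
      rw [← Finset.add_sum_erase _ _ (Finset.mem_univ i1)] at hst
      have ei1 : update (update p i1 (p i1 - 3)) i1 (update p i1 (p i1 - 3) i1 - 1)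
          = update p i1 (p i1 - 4) := by
        funext i
        simp only [update_apply]
        split_ifs <;> (try subst_vars) <;> first | rfl | omega | simp_all
      rw [ei1] at hst
      have hc : ((update p i1 (p i1 - 3) i1 : ℕ) : ℝ) = (p i1 : ℝ) - 3 := by
        rw [update_self, Nat.cast_sub (by omega)]; norm_num
      rw [hc] at hst
      have hsum : ∑ k ∈ Finset.univ.erase i1, S i1 k * ((update p i1 (p i1 - 3) k : ℕ) : ℝ) *
            nMom n μ S (update (update p i1 (p i1 - 3)) k (update p i1 (p i1 - 3) k - 1))
          = ∑ l ∈ Finset.univ.erase i1, S l i1 * (p l : ℝ) *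
            nMom n μ S (update (update p i1 (p i1 - 3)) l (p l - 1)) := by
        refine Finset.sum_congr rfl fun k hk => ?_
        have hkne : k ≠ i1 := (Finset.mem_erase.1 hk).1
        rw [update_of_ne hkne, hsym k]
      rw [hsum] at hst
      linear_combination (S i1 i1 * ((p i1 : ℝ) - 2)) * hst
  -- step 4
  have h4 : ∀ k, k ≠ i1 → nMom n μ S (update (update p i1 (p i1 - 1)) k (p k - 1))
      = μ i1 * nMom n μ S (update (update p i1 (p i1 - 2)) k (p k - 1))
      + S i1 i1 * ((p i1 : ℝ) - 2) *
          nMom n μ S (update (update p i1 (p i1 - 3)) k (p k - 1))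
      + S k i1 * ((p k - 1 : ℕ) : ℝ) *
          nMom n μ S (update (update p i1 (p i1 - 2)) k (p k - 2))
      + ∑ l ∈ (Finset.univ.erase i1).erase k, S l i1 * (p l : ℝ) *
          nMom n μ S (update (update (update p i1 (p i1 - 2)) k (p k - 1)) l (p l - 1)) := by
    intro k hk
    have hst := stein hn hS hfin (update (update p i1 (p i1 - 2)) k (p k - 1)) i1
    have e4 : update (update (update p i1 (p i1 - 2)) k (p k - 1)) i1
        (update (update p i1 (p i1 - 2)) k (p k - 1) i1 + 1)
        = update (update p i1 (p i1 - 1)) k (p k - 1) := by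
      funext i
      simp only [update_apply]
      split_ifs <;> (try subst_vars) <;> first | rfl | omega | simp_all
    rw [e4] at hst
    rw [← Finset.add_sum_erase _ _ (Finset.mem_univ i1)] at hst
    have hkmem : k ∈ Finset.univ.erase i1 := Finset.mem_erase.2 ⟨hk, Finset.mem_univ k⟩
    rw [← Finset.add_sum_erase _ _ hkmem] at hst
    have ei1 : update (update (update p i1 (p i1 - 2)) k (p k - 1)) i1
        (update (update p i1 (p i1 - 2)) k (p k - 1) i1 - 1)
        = update (update p i1 (p i1 - 3)) k (p k - 1) := by
      funext i
      simp only [update_apply]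
      split_ifs <;> (try subst_vars) <;> first | rfl | omega | simp_all
    rw [ei1] at hst
    have hci1 : ((update (update p i1 (p i1 - 2)) k (p k - 1) i1 : ℕ) : ℝ)
        = (p i1 : ℝ) - 2 := by
      rw [update_of_ne (Ne.symm hk), update_self]; exact c2
    rw [hci1] at hst
    have ek : update (update (update p i1 (p i1 - 2)) k (p k - 1)) k
        (update (update p i1 (p i1 - 2)) k (p k - 1) k - 1)
        = update (update p i1 (p i1 - 2)) k (p k - 2) := by
      funext i
      simp only [update_apply]
      split_ifs <;> (try subst_vars) <;> first | rfl | omega | simp_all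
    rw [ek] at hst
    have hck : (update (update p i1 (p i1 - 2)) k (p k - 1) k : ℕ) = p k - 1 := by
      rw [update_self]
    rw [hck] at hst
    have hsum : ∑ l ∈ (Finset.univ.erase i1).erase k,
          S i1 l * ((update (update p i1 (p i1 - 2)) k (p k - 1) l : ℕ) : ℝ) *
          nMom n μ S (update (update (update p i1 (p i1 - 2)) k (p k - 1)) l
            (update (update p i1 (p i1 - 2)) k (p k - 1) l - 1))
        = ∑ l ∈ (Finset.univ.erase i1).erase k, S l i1 * (p l : ℝ) *
          nMom n μ S (update (update (update p i1 (p i1 - 2)) k (p k - 1)) l (p l - 1)) := by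
      refine Finset.sum_congr rfl fun l hl => ?_
      have hl1 : l ≠ k := (Finset.mem_erase.1 hl).1
      have hl2 : l ≠ i1 := (Finset.mem_erase.1 (Finset.mem_erase.1 hl).2).1
      rw [update_of_ne hl1, update_of_ne hl2, hsym l]
    rw [hsum] at hst
    rw [hst, hsym k]
    ring
  -- combine
  have cSv : ∑ j ∈ Finset.univ.erase i1,
        S i1 i1 * S j i1 * ((p i1 : ℝ) - 2) * (p j : ℝ) *
          nMom n μ S (update (update p i1 (p i1 - 3)) j (p j - 1))
      = S i1 i1 * ((p i1 : ℝ) - 2) *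
          ∑ l ∈ Finset.univ.erase i1, S l i1 * (p l : ℝ) *
            nMom n μ S (update (update p i1 (p i1 - 3)) l (p l - 1)) := by
    rw [Finset.mul_sum]
    refine Finset.sum_congr rfl fun j _ => by ring
  have c1' : ∑ k ∈ Finset.univ.erase i1, S k i1 * (p k : ℝ) *
        nMom n μ S (update (update p i1 (p i1 - 1)) k (p k - 1))
      = μ i1 * ∑ j ∈ Finset.univ.erase i1, S j i1 * (p j : ℝ) *
            nMom n μ S (update (update p i1 (p i1 - 2)) j (p j - 1))
        + ∑ j ∈ Finset.univ.erase i1,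
            S i1 i1 * S j i1 * ((p i1 : ℝ) - 2) * (p j : ℝ) *
              nMom n μ S (update (update p i1 (p i1 - 3)) j (p j - 1))
        + ∑ j ∈ Finset.univ.erase i1,
            (S j i1) ^ 2 * (p j : ℝ) * ((p j : ℝ) - 1) *
              nMom n μ S (update (update p i1 (p i1 - 2)) j (p j - 2))
        + ∑ j ∈ Finset.univ.erase i1, ∑ i ∈ (Finset.univ.erase i1).erase j,
            S j i1 * S i i1 * (p j : ℝ) * (p i : ℝ) *
              nMom n μ S (update (update (update p i1 (p i1 - 2)) j (p j - 1)) i (p i - 1)) := by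
    have step : ∀ k ∈ Finset.univ.erase i1, S k i1 * (p k : ℝ) *
          nMom n μ S (update (update p i1 (p i1 - 1)) k (p k - 1))
        = μ i1 * (S k i1 * (p k : ℝ) *
              nMom n μ S (update (update p i1 (p i1 - 2)) k (p k - 1)))
          + S i1 i1 * S k i1 * ((p i1 : ℝ) - 2) * (p k : ℝ) *
              nMom n μ S (update (update p i1 (p i1 - 3)) k (p k - 1))
          + (S k i1) ^ 2 * (p k : ℝ) * ((p k : ℝ) - 1) *
              nMom n μ S (update (update p i1 (p i1 - 2)) k (p k - 2))
          + ∑ i ∈ (Finset.univ.erase i1).erase k,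
              S k i1 * S i i1 * (p k : ℝ) * (p i : ℝ) *
                nMom n μ S (update (update (update p i1 (p i1 - 2)) k (p k - 1)) i (p i - 1)) := by
      intro k hk
      have hkne : k ≠ i1 := (Finset.mem_erase.1 hk).1
      have hcast : (p k : ℝ) * ((p k - 1 : ℕ) : ℝ) = (p k : ℝ) * ((p k : ℝ) - 1) := by
        rcases Nat.eq_zero_or_pos (p k) with h0 | h0
        · simp [h0]
        · rw [Nat.cast_sub h0]; norm_num
      have hmulsum : S k i1 * (p k : ℝ) *
            (∑ i ∈ (Finset.univ.erase i1).erase k, S i i1 * (p i : ℝ) *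
              nMom n μ S (update (update (update p i1 (p i1 - 2)) k (p k - 1)) i (p i - 1)))
          = ∑ i ∈ (Finset.univ.erase i1).erase k,
              S k i1 * S i i1 * (p k : ℝ) * (p i : ℝ) *
                nMom n μ S (update (update (update p i1 (p i1 - 2)) k (p k - 1)) i (p i - 1)) := by
        rw [Finset.mul_sum]
        refine Finset.sum_congr rfl fun i _ => by ring
      linear_combination (S k i1 * (p k : ℝ)) * h4 k hkne + hmulsum
        + (S k i1) ^ 2 * hcast *
          nMom n μ S (update (update p i1 (p i1 - 2)) k (p k - 2))
    rw [Finset.sum_congr rfl step, Finset.sum_add_distrib, Finset.sum_add_distrib,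
      Finset.sum_add_distrib, ← Finset.mul_sum]
  linear_combination h1 + μ i1 * h2 + hr2 + c1' - cSv
end

section
/- For every integer n ≥ 3 with n ≠ 4, ∫₀^∞ t^{n/2−1} e^{−t}/(1+e^{−t})² dt = Γ(n/2) (1 − 2^{2−n/2}) ζ(n/2 − 1), where ζ is the Riemann zeta function. Equivalently, the normalizing constant of the n-dimensional logistic density generator is c_n = 1/( π^{n/2} (2^{n/2} − 4) ζ(n/2 − 1) ). -/
open MeasureTheory Real Set

section LogisticAux

open Complex


noncomputable def logF : ℝ → ℂ := fun t ↦ ((Real.exp (-t) / (1 + Real.exp (-t)) ^ 2 : ℝ) : ℂ)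

lemma logF_hasSum {t : ℝ} (ht : t ∈ Ioi (0:ℝ)) :
    HasSum (fun k : ℕ ↦ ((-1:ℂ)^(k+1) * k) * Real.exp (-(k:ℝ) * t)) (logF t) := by
  have ht' : 0 < t := ht
  set x : ℝ := Real.exp (-t) with hx
  have hx1 : ‖(-(x:ℂ))‖ < 1 := by
    simp only [norm_neg, Complex.norm_real, Real.norm_eq_abs, abs_of_pos (Real.exp_pos _)]
    rw [hx, abs_of_pos (Real.exp_pos _)]
    exact Real.exp_lt_one_iff.mpr (by linarith)
  have h := (hasSum_coe_mul_geometric_of_norm_lt_one (𝕜 := ℂ) hx1).neg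
  have hterm : ∀ k : ℕ, -((k:ℂ) * (-(x:ℂ))^k) = ((-1:ℂ)^(k+1) * k) * Real.exp (-(k:ℝ) * t) := by
    intro k
    have : Real.exp (-(k:ℝ) * t) = x ^ k := by
      rw [hx, ← Real.exp_nat_mul]; ring_nf
    rw [this]
    push_cast
    ring
  rw [funext hterm] at h
  convert h using 1
  · rfl
  have hd : ((1:ℂ) + x)^2 ≠ 0 := by
    have : (0:ℝ) < 1 + x := by positivity
    intro hc
    rw [pow_eq_zero_iff (by norm_num)] at hc
    have h2 : (1:ℝ) + x = 0 := by exact_mod_cast hc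
    linarith
  have : -(-(x:ℂ) / (1 - -(x:ℂ)) ^ 2) = (x:ℂ) / (1 + x)^2 := by ring_nf
  rw [this, logF, hx]
  push_cast
  ring_nf

lemma hasSum_eta {w : ℂ} (hw : 1 < w.re) :
    HasSum (fun k : ℕ ↦ (-1:ℂ)^(k+1) / (k:ℂ)^w) ((1 - 2^((1:ℂ)-w)) * riemannZeta w) := by
  have hw0 : w ≠ 0 := by intro h; rw [h, Complex.zero_re] at hw; linarith
  have h1 : HasSum (fun k : ℕ ↦ 1 / (k:ℂ)^w) (riemannZeta w) := by
    have hsum : Summable (fun k : ℕ ↦ 1 / (k:ℂ)^w) := Complex.summable_one_div_nat_cpow.mpr hw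
    have := hsum.hasSum
    rwa [← zeta_eq_tsum_one_div_nat_cpow hw] at this
  -- even part
  set g : ℕ → ℂ := fun k ↦ if 2 ∣ k then 2 / (k:ℂ)^w else 0 with hg
  have h2k : ∀ k : ℕ, g (2 * k) = 2 * (2:ℂ)^(-w) * (1 / (k:ℂ)^w) := by
    intro k
    have : (2:ℕ) ∣ 2 * k := Dvd.intro k rfl
    rw [hg]; simp only [this, if_true]
    rcases Nat.eq_zero_or_pos k with rfl | hk
    · simp [Complex.zero_cpow hw0]
    · have hkc : ((2 * k : ℕ) : ℂ) = ((2:ℝ):ℂ) * ((k:ℝ):ℂ) := by push_cast; ring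
      rw [hkc, mul_cpow_ofReal_nonneg (by norm_num) (by positivity), Complex.cpow_neg]
      have hk2 : ((2:ℝ):ℂ)^w ≠ 0 := by
        norm_num [Complex.cpow_eq_zero_iff]
      have hkk : ((k:ℝ):ℂ)^w ≠ 0 := by
        intro hc
        rw [Complex.cpow_eq_zero_iff] at hc
        have : (k:ℝ) = 0 := by exact_mod_cast hc.1
        exact absurd this (by positivity)
      field_simp
      push_cast at hkk ⊢
      field_simp
  have h2 : HasSum g (2^((1:ℂ)-w) * riemannZeta w) := by
    have hinj : Function.Injective (fun k : ℕ ↦ 2 * k) := by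
      intro a b h; simp only [] at h; omega
    have hvan : ∀ k ∉ Set.range (fun k : ℕ ↦ 2 * k), g k = 0 := by
      intro k hk
      rw [hg]; simp only [ite_eq_right_iff]
      intro hdvd
      refine absurd ⟨k / 2, ?_⟩ hk
      show 2 * (k / 2) = k
      omega
    rw [← Function.Injective.hasSum_iff hinj hvan]
    have := (h1.mul_left (2 * (2:ℂ)^(-w)))
    have heq : (fun k : ℕ ↦ 2 * (2:ℂ)^(-w) * (1 / (k:ℂ)^w)) = (g ∘ fun k : ℕ ↦ 2 * k) := by
      funext k; exact (h2k k).symm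
    rw [heq] at this
    convert this using 1
    · rfl
    rw [show (1:ℂ) - w = 1 + -w by ring, Complex.cpow_add _ _ (by norm_num : (2:ℂ) ≠ 0),
      Complex.cpow_one]
  have h3 := h1.sub h2
  have hterm : ∀ k : ℕ, 1 / (k:ℂ)^w - g k = (-1:ℂ)^(k+1) / (k:ℂ)^w := by
    intro k
    rw [hg]
    rcases Nat.even_or_odd k with he | ho
    · have : (2:ℕ) ∣ k := he.two_dvd
      simp only [this, if_true]
      have hpow : (-1:ℂ)^(k+1) = -1 := Odd.neg_one_pow (he.add_one)
      rw [hpow]; ring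
    · have : ¬ (2:ℕ) ∣ k := by
        rw [Nat.two_dvd_ne_zero]; exact Nat.odd_iff.mp ho
      simp only [this, if_false]
      have hpow : (-1:ℂ)^(k+1) = 1 := Even.neg_one_pow (by simpa using ho.add_one)
      rw [hpow]; ring
  rw [funext hterm] at h3
  convert h3 using 1
  · rfl
  ring

lemma mellin_logF_eq {s : ℂ} (hs : 2 < s.re) :
    mellin logF s = Complex.Gamma s * (1 - 2^((2:ℂ)-s)) * riemannZeta (s-1) := by
  have hs0 : 0 < s.re := by linarith
  set a : ℕ → ℂ := fun k ↦ (-1:ℂ)^(k+1) * k with ha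
  set p : ℕ → ℝ := fun k ↦ (k:ℝ) with hp
  have hap : ∀ k, a k = 0 ∨ 0 < p k := by
    intro k
    rcases Nat.eq_zero_or_pos k with rfl | hk
    · left; simp [ha]
    · right; simp only [hp]; exact_mod_cast hk
  have hF : ∀ t ∈ Ioi (0:ℝ), HasSum (fun k ↦ a k * Real.exp (-p k * t)) (logF t) := by
    intro t ht
    exact logF_hasSum ht
  have h_sum : Summable fun k ↦ ‖a k‖ / (p k) ^ s.re := by
    have heq : ∀ k : ℕ, ‖a k‖ / (p k) ^ s.re = ((k:ℝ) ^ (s.re - 1))⁻¹ := by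
      intro k
      rcases Nat.eq_zero_or_pos k with rfl | hk
      · simp only [ha, hp, Nat.cast_zero]
        rw [Real.zero_rpow (by linarith : s.re - 1 ≠ 0)]
        simp
      · have hk' : (0:ℝ) < k := by exact_mod_cast hk
        simp only [ha, hp, norm_mul, norm_pow, norm_neg, norm_one, one_pow, one_mul,
          Complex.norm_natCast]
        rw [Real.rpow_sub hk', Real.rpow_one, inv_div]
    rw [funext heq]
    exact Real.summable_nat_rpow_inv.mpr (by linarith)
  have hmain := hasSum_mellin hap hs0 hF h_sum
  -- now compute the sum
  have hw : 1 < (s - 1).re := by simp [Complex.sub_re]; linarith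
  have heta := (hasSum_eta hw).mul_left (Complex.Gamma s)
  have hterm : ∀ k : ℕ, Complex.Gamma s * ((-1:ℂ)^(k+1) / (k:ℂ)^(s-1)) =
      Complex.Gamma s * a k / ((p k : ℝ):ℂ)^s := by
    intro k
    rcases Nat.eq_zero_or_pos k with rfl | hk
    · simp only [ha, hp, Nat.cast_zero, Complex.ofReal_zero]
      rw [Complex.zero_cpow (by intro h; rw [h, Complex.zero_re] at hw; linarith : s - 1 ≠ 0)]
      push_cast
      rw [Complex.zero_cpow (by intro h; rw [h, Complex.zero_re] at hs0; linarith : s ≠ 0)]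
      simp
    · have hkc : ((k:ℝ):ℂ) = (k:ℂ) := by push_cast; ring
      have hk0 : (k:ℂ) ≠ 0 := Nat.cast_ne_zero.mpr hk.ne'
      have hcs : (k:ℂ)^(s-1) = (k:ℂ)^s / (k:ℂ) := by
        rw [Complex.cpow_sub _ _ hk0, Complex.cpow_one]
      have hne : (k:ℂ)^s ≠ 0 := by
        intro hc
        rw [Complex.cpow_eq_zero_iff] at hc
        exact hk0 hc.1
      simp only [ha, hp, hkc, hcs]
      field_simp
  rw [funext hterm] at heta
  have := heta.unique hmain
  rw [← this]
  ring

lemma logF_norm_le (t : ℝ) : ‖logF t‖ ≤ Real.exp (-t) := by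
  have h1 : (0:ℝ) < 1 + Real.exp (-t) := by positivity
  have h2 : (1:ℝ) ≤ (1 + Real.exp (-t))^2 := by nlinarith [Real.exp_pos (-t)]
  rw [logF, Complex.norm_real, Real.norm_eq_abs,
    _root_.abs_of_nonneg (by positivity : (0:ℝ) ≤ Real.exp (-t) / (1 + Real.exp (-t))^2),
    div_le_iff₀ (by positivity)]
  nlinarith [Real.exp_pos (-t)]

lemma mellin_logF_differentiableAt {s : ℂ} (hs : 0 < s.re) :
    DifferentiableAt ℂ (mellin logF) s := by
  refine mellin_differentiableAt_of_isBigO_rpow_exp one_pos ?_ ?_ ?_ (by simpa using hs)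
  · have hc : Continuous (fun t : ℝ ↦ Real.exp (-t) / (1 + Real.exp (-t))^2) := by
      apply Continuous.div (by continuity) (by continuity)
      intro t; positivity
    exact (Complex.continuous_ofReal.comp hc).locallyIntegrable.locallyIntegrableOn _
  · refine Asymptotics.IsBigO.of_bound 1 ?_
    filter_upwards with t
    rw [one_mul, Real.norm_eq_abs, Real.abs_exp, neg_one_mul]
    exact logF_norm_le t
  · refine Asymptotics.IsBigO.of_bound 1 ?_
    filter_upwards [self_mem_nhdsWithin] with t (ht : (0:ℝ) < t)
    rw [neg_zero, one_mul, Real.norm_eq_abs, Real.rpow_zero, abs_one]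
    refine (logF_norm_le t).trans ?_
    rw [Real.exp_le_one_iff]
    linarith

noncomputable def logG : ℂ → ℂ :=
  fun s ↦ Complex.Gamma s * (1 - 2^((2:ℂ)-s)) * riemannZeta (s-1)

lemma mellin_logF_eq_real {r : ℝ} (hr : 1/2 < r) (hr2 : r ≠ 2) :
    mellin logF (r:ℂ) = logG (r:ℂ) := by
  rcases lt_or_gt_of_ne hr2 with hlt | hgt
  swap
  · exact mellin_logF_eq (by simpa using hgt)
  -- analytic continuation
  set U : Set ℂ := {z : ℂ | 1/2 < z.re ∧ z.im + 4 * z.re < 8} with hU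
  have hUopen : IsOpen U := by
    apply IsOpen.inter
    · exact isOpen_lt continuous_const Complex.continuous_re
    · exact isOpen_lt (Complex.continuous_im.add (continuous_const.mul Complex.continuous_re))
        continuous_const
  have hUconv : Convex ℝ U := by
    apply Convex.inter (convex_halfSpace_re_gt _)
    have hlin : IsLinearMap ℝ (fun z : ℂ ↦ z.im + 4 * z.re) := by
      constructor
      · intro x y
        simp only [Complex.add_im, Complex.add_re]
        ring
      · intro c z
        simp only [Complex.smul_im, Complex.smul_re, smul_eq_mul]
        ring
    exact convex_halfSpace_lt hlin 8
  have hzU : ∀ z ∈ U, z ≠ 2 := by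
    intro z hz hc
    rw [hc] at hz
    obtain ⟨-, h2⟩ := hz
    norm_num at h2
  have hM : AnalyticOnNhd ℂ (mellin logF) U := by
    apply DifferentiableOn.analyticOnNhd ?_ hUopen
    intro z hz
    exact (mellin_logF_differentiableAt (by linarith [hz.1])).differentiableWithinAt
  have hG : AnalyticOnNhd ℂ logG U := by
    apply DifferentiableOn.analyticOnNhd ?_ hUopen
    intro z hz
    apply DifferentiableAt.differentiableWithinAt
    have h1 : DifferentiableAt ℂ Complex.Gamma z := by
      apply Complex.differentiableAt_Gamma
      intro m hc
      have hre : z.re = -(m:ℝ) := by rw [hc]; simp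
      have h1 := hz.1
      rw [hre] at h1
      have hm : (0:ℝ) ≤ (m:ℝ) := Nat.cast_nonneg m
      linarith
    have h2 : DifferentiableAt ℂ (fun z : ℂ ↦ 1 - (2:ℂ)^((2:ℂ)-z)) z := by
      apply DifferentiableAt.sub (differentiableAt_const _)
      exact DifferentiableAt.const_cpow ((differentiableAt_const _).sub differentiableAt_id)
        (Or.inl two_ne_zero)
    have h3 : DifferentiableAt ℂ (fun z : ℂ ↦ riemannZeta (z - 1)) z := by
      have hz1 : z - 1 ≠ 1 := by
        intro hc
        apply hzU z hz
        have : z = 2 := by linear_combination hc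
        exact this
      exact (differentiableAt_riemannZeta hz1).comp z
        (differentiableAt_id.sub (differentiableAt_const _))
    exact (h1.mul h2).mul h3
  have hz₀ : ((3:ℂ) + (-6) * Complex.I) ∈ U := by
    constructor <;> simp [hU] <;> norm_num
  have hev : mellin logF =ᶠ[nhds ((3:ℂ) + (-6) * Complex.I)] logG := by
    have hopen : IsOpen {z : ℂ | 2 < z.re} := isOpen_lt continuous_const Complex.continuous_re
    have hmem : {z : ℂ | 2 < z.re} ∈ nhds ((3:ℂ) + (-6) * Complex.I) := by
      apply hopen.mem_nhds
      show (2:ℝ) < ((3:ℂ) + (-6) * Complex.I).re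
      simp
      norm_num
    filter_upwards [hmem] with z (hz : 2 < z.re)
    exact mellin_logF_eq hz
  have := AnalyticOnNhd.eqOn_of_preconnected_of_eventuallyEq hM hG hUconv.isPreconnected hz₀ hev
  apply this
  constructor
  · simpa using hr
  · show (r:ℂ).im + 4 * (r:ℂ).re < 8
    simp only [Complex.ofReal_im, Complex.ofReal_re]
    linarith

lemma mellin_logF_as_integral (r : ℝ) :
    mellin logF (r:ℂ) =
      ((∫ t in Ioi (0:ℝ), t ^ (r-1) * (Real.exp (-t) / (1 + Real.exp (-t)) ^ 2) : ℝ) : ℂ) := by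
  rw [mellin]
  have hcg : ∀ t ∈ Ioi (0:ℝ), (t:ℂ)^((r:ℂ)-1) • logF t =
      (fun u : ℝ ↦ ((u ^ (r-1) * (Real.exp (-u) / (1 + Real.exp (-u)) ^ 2) : ℝ) : ℂ)) t := by
    intro t ht
    have ht' : (0:ℝ) < t := ht
    rw [smul_eq_mul, logF]
    rw [show ((r:ℂ)-1) = ((r-1:ℝ):ℂ) by push_cast; ring, ← Complex.ofReal_cpow ht'.le]
    push_cast
    ring
  rw [setIntegral_congr_fun measurableSet_Ioi hcg]
  exact integral_ofReal

end LogisticAux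

/-- For every integer `n ≥ 3` with `n ≠ 4`:
`∫₀^∞ t^(n/2-1) e^(-t)/(1+e^(-t))² dt = Γ(n/2)(1-2^(2-n/2))ζ(n/2-1)` with `ζ` the Riemann zeta
function; equivalently, the normalizing constant of the `n`-dimensional logistic density
generator is `c_n = 1/(π^(n/2)(2^(n/2)-4)ζ(n/2-1))`. -/
theorem stmt_17 (n : ℕ) (hn : 3 ≤ n) (hn4 : n ≠ 4) :
    ((∫ t in Ioi (0 : ℝ), t ^ ((n : ℝ) / 2 - 1) *
        (Real.exp (-t) / (1 + Real.exp (-t)) ^ 2) : ℝ) : ℂ) =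
      (Real.Gamma ((n : ℝ) / 2) : ℂ) * (1 - (2 : ℂ) ^ (2 - (n : ℂ) / 2)) *
        riemannZeta ((n : ℂ) / 2 - 1) ∧
    ((Real.Gamma ((n : ℝ) / 2) / (2 * π) ^ ((n : ℝ) / 2) *
        (∫ t in Ioi (0 : ℝ), t ^ ((n : ℝ) / 2 - 1) *
          (Real.exp (-t) / (1 + Real.exp (-t)) ^ 2))⁻¹ : ℝ) : ℂ) =
      1 / ((π : ℂ) ^ ((n : ℂ) / 2) * ((2 : ℂ) ^ ((n : ℂ) / 2) - 4) *
        riemannZeta ((n : ℂ) / 2 - 1)) := by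
  set r : ℝ := (n:ℝ) / 2 with hrdef
  have hr3 : (3:ℝ) ≤ (n:ℝ) := by exact_mod_cast hn
  have hr : 1/2 < r := by rw [hrdef]; linarith
  have hr0 : 0 < r := by linarith
  have hr2 : r ≠ 2 := by
    intro hc
    apply hn4
    have : (n:ℝ) = 4 := by rw [hrdef] at hc; linarith
    exact_mod_cast this
  have hsc : ((r:ℝ):ℂ) = (n:ℂ)/2 := by rw [hrdef]; push_cast; ring
  set I : ℝ := ∫ t in Ioi (0:ℝ), t ^ (r - 1) * (Real.exp (-t) / (1 + Real.exp (-t)) ^ 2)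
    with hIdef
  have key : (I:ℂ) = (Real.Gamma r : ℂ) * (1 - (2:ℂ) ^ (2 - (n:ℂ)/2)) *
      riemannZeta ((n:ℂ)/2 - 1) := by
    rw [← mellin_logF_as_integral r, mellin_logF_eq_real hr hr2, logG, Complex.Gamma_ofReal,
      hsc]
  constructor
  · exact key
  · -- second part
    set Z : ℂ := riemannZeta ((n:ℂ)/2 - 1) with hZdef
    rcases eq_or_ne Z 0 with hZ | hZ
    · have hI0 : I = 0 := by
        have := key
        rw [hZ, mul_zero] at this
        exact_mod_cast this
      rw [hI0, hZ]
      simp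
    · have hA : (Real.Gamma r : ℂ) ≠ 0 := by
        exact_mod_cast (Real.Gamma_pos_of_pos hr0).ne'
      have h2r1 : (2:ℝ) ^ (2 - r) ≠ 1 := by
        rcases lt_or_gt_of_ne hr2 with h | h
        · have : (2:ℝ)^(0:ℝ) < (2:ℝ)^(2-r) :=
            (Real.rpow_lt_rpow_left_iff one_lt_two).mpr (by linarith)
          rw [Real.rpow_zero] at this
          exact (ne_of_gt this)
        · have : (2:ℝ)^(2-r) < (2:ℝ)^(0:ℝ) :=
            (Real.rpow_lt_rpow_left_iff one_lt_two).mpr (by linarith)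
          rw [Real.rpow_zero] at this
          exact (ne_of_lt this)
      have hcast2 : (2:ℂ) ^ (2 - (n:ℂ)/2) = (((2:ℝ) ^ (2 - r) : ℝ) : ℂ) := by
        rw [Complex.ofReal_cpow (by norm_num : (0:ℝ) ≤ 2)]
        norm_num [← hsc]
      have hB : (1 - (2:ℂ) ^ (2 - (n:ℂ)/2)) ≠ 0 := by
        rw [hcast2]
        intro hc
        apply h2r1
        have : (((2:ℝ) ^ (2 - r) : ℝ) : ℂ) = 1 := by linear_combination -hc
        exact_mod_cast this
      have hI0 : (I:ℂ) ≠ 0 := by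
        rw [key]
        exact mul_ne_zero (mul_ne_zero hA hB) hZ
      have hI0' : I ≠ 0 := by exact_mod_cast hI0
      -- casts
      have hcastpow : (((2 * π) ^ r : ℝ) : ℂ) = (2 * (π:ℂ)) ^ ((n:ℂ)/2) := by
        rw [Complex.ofReal_cpow (by positivity : (0:ℝ) ≤ 2 * π)]
        rw [← hsc]
        push_cast
        ring_nf
      have hsplit : (2 * (π:ℂ)) ^ ((n:ℂ)/2) = (2:ℂ)^((n:ℂ)/2) * (π:ℂ)^((n:ℂ)/2) := by
        rw [show (2 * (π:ℂ)) = (((2:ℝ):ℂ) * ((π:ℝ):ℂ)) by norm_num]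
        rw [Complex.mul_cpow_ofReal_nonneg (by norm_num) Real.pi_pos.le]
        norm_num
      have h2sc : (2:ℂ)^((n:ℂ)/2) ≠ 0 := by
        intro hc; rw [Complex.cpow_eq_zero_iff] at hc; norm_num at hc
      have hπsc : (π:ℂ)^((n:ℂ)/2) ≠ 0 := by
        intro hc; rw [Complex.cpow_eq_zero_iff] at hc
        exact (Complex.ofReal_ne_zero.mpr Real.pi_ne_zero) hc.1
      have h4 : (2:ℂ) ^ (2 - (n:ℂ)/2) = 4 / (2:ℂ)^((n:ℂ)/2) := by
        rw [Complex.cpow_sub _ _ (by norm_num : (2:ℂ) ≠ 0)]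
        congr 1
        rw [show (2:ℂ) = ((2:ℕ):ℂ) by norm_num, Complex.cpow_natCast]
        norm_num
      have hpow0 : ((2 * π) ^ r : ℝ) ≠ 0 := by positivity
      rw [Complex.ofReal_mul, Complex.ofReal_div, Complex.ofReal_inv, hcastpow, hsplit, key, h4]
      have h24 : (2:ℂ)^((n:ℂ)/2) - 4 ≠ 0 := by
        intro hc
        apply hB
        rw [h4]
        field_simp
        linear_combination hc
      field_simp
end
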